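/- Let V be a vector space over a field and f : V → V a linear map. Then f is unit-regular in the monoid L(V) if and only if nullity(f) = corank(f), i.e. the dimension of the kernel of f equals the dimension of the quotient space V/R(f). -/

import Mathlib

/-- An element `s` of a monoid is unit-regular if `s * u * s = s` for some unit `u`. -/
def IsUnitRegular {M : Type*} [Monoid M] (s : M) : Prop :=
  ∃ u : Mˣ, s * (↑u : M) * s = s

theorem stmt9 {K V : Type*} [Field K] [AddCommGroup V] [Module K V]
    (f : Module.End K V) :
    IsUnitRegular f ↔
      Module.rank K (LinearMap.ker f) = Module.rank K (V ⧸ LinearMap.range f) := by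
  constructor
  · rintro ⟨u, hu⟩
    set g : Module.End K V := (↑u : Module.End K V) with hg
    have e : V ≃ₗ[K] V := LinearMap.GeneralLinearGroup.generalLinearEquiv K V u
    set e := LinearMap.GeneralLinearGroup.generalLinearEquiv K V u with he
    have hecoe : (e : V →ₗ[K] V) = g := rfl
    -- f * g is idempotent
    have hidem : (f * g) * (f * g) = f * g := by
      rw [← mul_assoc, hu]
    have hproj : LinearMap.IsProj (LinearMap.range (f * g)) (f * g) := by
      constructor
      · intro x; exact LinearMap.mem_range_self _ x
      · rintro x ⟨y, rfl⟩
        have := congrArg (fun h : Module.End K V => h y) hidem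
        simpa using this
    have hcompl : IsCompl (LinearMap.range (f * g)) (LinearMap.ker (f * g)) :=
      hproj.isCompl
    have hrange : LinearMap.range (f * g) = LinearMap.range f := by
      apply le_antisymm
      · exact LinearMap.range_comp_le_range g f
      · conv_lhs => rw [← hu]
        exact LinearMap.range_comp_le_range f (f * g)
    rw [hrange] at hcompl
    have hker : LinearMap.ker (f * g) = (LinearMap.ker f).map (e.symm : V →ₗ[K] V) := by
      rw [show f * g = f ∘ₗ g from rfl, LinearMap.ker_comp, ← hecoe,
        Submodule.comap_equiv_eq_map_symm]
    have h1 : Module.rank K (LinearMap.ker f) = Module.rank K (LinearMap.ker (f * g)) := by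
      rw [hker]
      exact (e.symm.submoduleMap (LinearMap.ker f)).rank_eq
    have h2 : Module.rank K (V ⧸ LinearMap.range f) = Module.rank K (LinearMap.ker (f * g)) :=
      (Submodule.quotientEquivOfIsCompl _ _ hcompl).rank_eq
    rw [h1, h2]
  · intro hrk
    obtain ⟨W, hW⟩ := Submodule.exists_isCompl (LinearMap.ker f)
    obtain ⟨C, hC⟩ := Submodule.exists_isCompl (LinearMap.range f)
    have eQC : (V ⧸ LinearMap.range f) ≃ₗ[K] C := Submodule.quotientEquivOfIsCompl _ _ hC
    have hrkC : Module.rank K C = Module.rank K (LinearMap.ker f) := by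
      rw [← eQC.rank_eq, ← hrk]
    obtain ⟨eCK⟩ := nonempty_linearEquiv_of_rank_eq hrkC
    have eWR : W ≃ₗ[K] LinearMap.range f :=
      (Submodule.quotientEquivOfIsCompl (LinearMap.ker f) W hW).symm.trans f.quotKerEquivRange
    set eWR := (Submodule.quotientEquivOfIsCompl (LinearMap.ker f) W hW).symm.trans
      f.quotKerEquivRange with heWR
    have hkey : ∀ w : W, (eWR w : V) = f (w : V) := by
      intro w
      simp [heWR, Submodule.quotientEquivOfIsCompl_symm_apply]
    have mid : (↥(LinearMap.range f) × ↥C) ≃ₗ[K] (↥W × ↥(LinearMap.ker f)) :=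
      LinearEquiv.prodCongr eWR.symm eCK
    set mid : (↥(LinearMap.range f) × ↥C) ≃ₗ[K] (↥W × ↥(LinearMap.ker f)) :=
      LinearEquiv.prodCongr eWR.symm eCK with hmid
    set u : V ≃ₗ[K] V :=
      ((Submodule.prodEquivOfIsCompl _ _ hC).symm.trans mid).trans
        (Submodule.prodEquivOfIsCompl W (LinearMap.ker f) hW.symm)
      with hudef
    refine ⟨⟨(u : V →ₗ[K] V), (u.symm : V →ₗ[K] V), ?_, ?_⟩, ?_⟩
    · ext x; simp [Module.End.mul_apply]
    · ext x; simp [Module.End.mul_apply]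
    · ext x
      simp only [Module.End.mul_apply]
      show f (u (f x)) = f x
      have hu1 : u (f x) = ((eWR.symm ⟨f x, LinearMap.mem_range_self f x⟩ : W) : V) := by
        rw [hudef]
        simp only [LinearEquiv.trans_apply]
        rw [show ((LinearMap.range f).prodEquivOfIsCompl C hC).symm (f x)
            = ((⟨f x, LinearMap.mem_range_self f x⟩ : ↥(LinearMap.range f)), 0) from
          Submodule.prodEquivOfIsCompl_symm_apply_left _ _ hC (⟨f x, LinearMap.mem_range_self f x⟩ : ↥(LinearMap.range f))]
        simp [hmid, Submodule.coe_prodEquivOfIsCompl', LinearEquiv.prodCongr_apply]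
      rw [hu1, ← hkey]
      simp
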